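/- Let c ∈ (0,1), let ∅ ≠ I ⊊ {0,...,K} be an index set, and let w ∈ ℝ^{K+1}_≥ satisfy ∑_{i∈I} w_i < c · min_{j∉I} w_j. Define the lifted weight w̄ by: w̄_i = (w_i / ∑_{j∈I} w_j) · c · min_{j∉I} w_j if i ∈ I and ∑_{j∈I} w_j > 0; w̄_i = (1/|I|) · c · min_{j∉I} w_j if i ∈ I and w_j = 0 for all j ∈ I; and w̄_i = w_i if i ∉ I. Then: (1) ∑_{i∈I} w̄_i = c · min_{j∉I} w̄_j; (2) w lies in the convex hull of {w̄, proj^I(w̄)}; and (3) w̄_i ≥ w_i for all i ∈ I. -/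

import Mathlib

theorem stmt3 {K : ℕ} (c : ℝ) (hc : c ∈ Set.Ioo (0:ℝ) 1)
    (I : Finset (Fin (K+1))) (hI : I.Nonempty) (hIc : Iᶜ.Nonempty)
    (w : Fin (K+1) → ℝ) (hw : ∀ i, 0 ≤ w i)
    (hlt : ∑ i ∈ I, w i < c * Iᶜ.inf' hIc w)
    (wbar : Fin (K+1) → ℝ)
    (hbar : ∀ i, wbar i =
      if i ∈ I then
        (if 0 < ∑ j ∈ I, w j then w i / (∑ j ∈ I, w j) * (c * Iᶜ.inf' hIc w)
         else (1 / (I.card : ℝ)) * (c * Iᶜ.inf' hIc w))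
      else w i) :
    (∑ i ∈ I, wbar i = c * Iᶜ.inf' hIc wbar) ∧
    w ∈ convexHull ℝ ({wbar, fun i => if i ∈ I then 0 else wbar i} :
        Set (Fin (K+1) → ℝ)) ∧
    ∀ i ∈ I, w i ≤ wbar i := by
  set S := ∑ j ∈ I, w j with hSdef
  set m := Iᶜ.inf' hIc w with hmdef
  have hS0 : 0 ≤ S := Finset.sum_nonneg fun i _ => hw i
  have hcm : 0 < c * m := lt_of_le_of_lt hS0 hlt
  have hinf : Iᶜ.inf' hIc wbar = m := by
    apply Finset.inf'_congr hIc rfl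
    intro j hj
    rw [hbar j, if_neg (Finset.mem_compl.mp hj)]
  have hsum : ∑ i ∈ I, wbar i = c * m := by
    by_cases hS : 0 < S
    · have hSne : S ≠ 0 := ne_of_gt hS
      calc ∑ i ∈ I, wbar i = ∑ i ∈ I, w i / S * (c * m) := by
            apply Finset.sum_congr rfl
            intro i hi; rw [hbar i, if_pos hi, if_pos hS]
        _ = (∑ i ∈ I, w i) / S * (c * m) := by rw [Finset.sum_div, Finset.sum_mul]
        _ = c * m := by rw [← hSdef, div_self hSne, one_mul]
    · have hcard : (I.card : ℝ) ≠ 0 := by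
        exact_mod_cast Finset.card_ne_zero_of_mem hI.choose_spec
      calc ∑ i ∈ I, wbar i = ∑ i ∈ I, (1 / (I.card : ℝ)) * (c * m) := by
            apply Finset.sum_congr rfl
            intro i hi; rw [hbar i, if_pos hi, if_neg hS]
        _ = (I.card : ℝ) * ((1 / (I.card : ℝ)) * (c * m)) := by
            rw [Finset.sum_const, nsmul_eq_mul]
        _ = c * m := by field_simp
  refine ⟨by rw [hinf]; exact hsum, ?_, ?_⟩
  · rw [convexHull_pair]
    set t := S / (c * m) with htdef
    have ht0 : 0 ≤ t := div_nonneg hS0 hcm.le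
    have ht1 : t ≤ 1 := by
      rw [htdef, div_le_one hcm]; exact hlt.le
    refine ⟨t, 1 - t, ht0, by linarith, by ring, ?_⟩
    funext i
    simp only [Pi.add_apply, Pi.smul_apply, smul_eq_mul]
    by_cases hi : i ∈ I
    · rw [if_pos hi, hbar i, if_pos hi]
      by_cases hS : 0 < S
      · rw [if_pos hS]
        field_simp [htdef]
        have hcancel : S / (c * m) * (c * m) = S := div_mul_cancel₀ S hcm.ne'
        rw [htdef]; linear_combination (w i) * hcancel
      · have hSz : S = 0 := le_antisymm (not_lt.mp hS) hS0
        have hwi : w i = 0 := by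
          have := Finset.sum_eq_zero_iff_of_nonneg (fun j _ => hw j) |>.mp hSz
          exact this i hi
        rw [if_neg hS, htdef, hSz, hwi]
        ring
    · rw [if_neg hi, hbar i, if_neg hi]
      ring
  · intro i hi
    rw [hbar i, if_pos hi]
    by_cases hS : 0 < S
    · rw [if_pos hS]
      have h1 : (1:ℝ) ≤ c * m / S := (one_le_div hS).mpr hlt.le
      calc w i = w i * 1 := (mul_one _).symm
        _ ≤ w i * (c * m / S) := by
            exact mul_le_mul_of_nonneg_left h1 (hw i)
        _ = w i / S * (c * m) := by ring
    · rw [if_neg hS]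
      have hSz : S = 0 := le_antisymm (not_lt.mp hS) hS0
      have hwi : w i = 0 :=
        (Finset.sum_eq_zero_iff_of_nonneg (fun j _ => hw j)).mp hSz i hi
      rw [hwi]
      positivity
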